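/- There is no continuous function F, defined on the subspace of Baire space consisting of all p : ℕ → ℕ that enumerate some FSL-instance tree T ⊆ List Bool, with values in Cantor space ℕ → Bool, such that whenever p enumerates such a tree T, F p is a δ_𝒮-name and the word δ_𝒮(F p) is a leaf of T. (In particular, the problem FSL is not computable.) -/

import Mathlib

/-- `p` enumerates the tree `T ⊆ List Bool` (via the injective encoding `code`) if
`T = {w | ∃ k, p k = code w + 1}`. -/
def EnumeratesTree (code : List Bool → ℕ) (p : ℕ → ℕ) (T : Set (List Bool)) : Prop :=
  T = {w | ∃ k, p k = code w + 1}

/-- `w` is a leaf of `T`: it belongs to `T` and has no proper extension in `T`. -/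
def IsLeaf (T : Set (List Bool)) (w : List Bool) : Prop :=
  w ∈ T ∧ ∀ u ∈ T, w <+: u → u = w

/-- `T` is an FSL-instance: a nonempty prefix-closed set of binary words such that every
element has an extension in `T` that is a leaf of `T`. -/
def FSLTree (T : Set (List Bool)) : Prop :=
  T.Nonempty ∧ (∀ w ∈ T, ∀ u, u <+: w → u ∈ T) ∧
    ∀ w ∈ T, ∃ u, w <+: u ∧ IsLeaf T u

/-- The letter contributed by one pair of bits in the representation `δ_𝒮`:
`(true, false)` contributes `false`, `(false, true)` contributes `true`,
`(false, false)` and `(true, true)` contribute nothing. -/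
def pairLetter : Bool → Bool → List Bool
  | true, false => [false]
  | false, true => [true]
  | _, _ => []

/-- The word read off from the first `n` consecutive pairs of `r`. -/
def decodePairs (r : ℕ → Bool) : ℕ → List Bool
  | 0 => []
  | n + 1 => decodePairs r n ++ pairLetter (r (2 * n)) (r (2 * n + 1))

/-- `r` is a `δ_𝒮`-name of the word `w`: all bits from some even position `2n` on are
`false`, and the pairs up to `n` decode to `w`. -/
def DeltaS (r : ℕ → Bool) (w : List Bool) : Prop :=
  ∃ n : ℕ, (∀ k, 2 * n ≤ k → r k = false) ∧ decodePairs r n = w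

/-! ### auxiliary list lemmas -/

lemma prefix_snoc_cases {α : Type*} {u l : List α} {a : α} (h : u <+: l ++ [a]) :
    u <+: l ∨ u = l ++ [a] := by
  rcases Nat.lt_or_ge u.length (l ++ [a]).length with hl | hl
  · left
    apply List.prefix_of_prefix_length_le h (List.prefix_append l [a])
    simpa using Nat.lt_succ_iff.1 (by simpa using hl)
  · right
    exact List.IsPrefix.eq_of_length h (le_antisymm h.length_le hl)

lemma prefix_eq_of_length {α : Type*} {u v l : List α} (hu : u <+: l) (hv : v <+: l)
    (h : u.length = v.length) : u = v :=
  List.IsPrefix.eq_of_length (List.prefix_of_prefix_length_le hu hv h.le) h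

lemma prefix_antisymm' {α : Type*} {u v : List α} (hu : u <+: v) (hv : v <+: u) : u = v :=
  List.IsPrefix.eq_of_length hu (le_antisymm hu.length_le hv.length_le)

/-! ### decodePairs lemmas -/

lemma decodePairs_congr {r r' : ℕ → Bool} : ∀ {n : ℕ}, (∀ j, j < 2 * n → r j = r' j) →
    decodePairs r n = decodePairs r' n
  | 0, _ => rfl
  | n + 1, h => by
    have h1 : ∀ j, j < 2 * n → r j = r' j := fun j hj => h j (by omega)
    simp only [decodePairs, decodePairs_congr h1, h (2 * n) (by omega),
      h (2 * n + 1) (by omega)]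

lemma decodePairs_prefix_le {r : ℕ → Bool} {m : ℕ} : ∀ {n : ℕ}, m ≤ n →
    decodePairs r m <+: decodePairs r n
  | 0, h => by rw [Nat.le_zero.1 h]
  | n + 1, h => by
    rcases Nat.lt_or_ge m (n + 1) with h' | h'
    · exact (decodePairs_prefix_le (Nat.lt_succ_iff.1 h')).trans
        (List.prefix_append _ _)
    · rw [le_antisymm h h']

lemma decodePairs_stable {r : ℕ → Bool} {n : ℕ} (hf : ∀ k, 2 * n ≤ k → r k = false) :
    ∀ {m : ℕ}, n ≤ m → decodePairs r m = decodePairs r n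
  | 0, h => by rw [Nat.le_zero.1 h]
  | m + 1, h => by
    rcases Nat.lt_or_ge n (m + 1) with h' | h'
    · have hm : n ≤ m := Nat.lt_succ_iff.1 h'
      have e1 : r (2 * m) = false := hf _ (by omega)
      have e2 : r (2 * m + 1) = false := hf _ (by omega)
      simp only [decodePairs, e1, e2, decodePairs_stable hf hm, pairLetter,
        List.append_nil]
    · rw [le_antisymm h h']

lemma deltaS_prefix {r : ℕ → Bool} {w : List Bool} (h : DeltaS r w) (m : ℕ) :
    decodePairs r m <+: w := by
  obtain ⟨n, hf, hd⟩ := h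
  rcases le_total m n with hmn | hnm
  · exact hd ▸ decodePairs_prefix_le hmn
  · rw [decodePairs_stable hf hnm, hd]

lemma forced_prefix {r r' : ℕ → Bool} {n : ℕ} {w' : List Bool}
    (hf : ∀ k, 2 * n ≤ k → r k = false) (h' : DeltaS r' w')
    (hag : ∀ j, j < 2 * n → r' j = r j) : decodePairs r n <+: w' := by
  have : decodePairs r n = decodePairs r' n := decodePairs_congr fun j hj => (hag j hj).symm
  exact this ▸ deltaS_prefix h' n

/-! ### the finite trees `Tset bs` -/

def Tset (bs : List Bool) : Set (List Bool) :=
  {u | u <+: bs ∨ ∃ t b, t <+: bs ∧ t.length < bs.length ∧ u = t ++ [b]}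

lemma Tset_self (bs : List Bool) : bs ∈ Tset bs := Or.inl List.prefix_rfl

lemma Tset_closed {bs u v : List Bool} (hu : u ∈ Tset bs) (hv : v <+: u) : v ∈ Tset bs := by
  rcases hu with h | ⟨t, b, ht, hlt, rfl⟩
  · exact Or.inl (hv.trans h)
  · rcases prefix_snoc_cases hv with h | rfl
    · exact Or.inl (h.trans ht)
    · exact Or.inr ⟨t, b, ht, hlt, rfl⟩

lemma Tset_leaf_self (bs : List Bool) : IsLeaf (Tset bs) bs := by
  refine ⟨Tset_self bs, fun u hu hpre => ?_⟩
  rcases hu with h | ⟨t, b, ht, hlt, rfl⟩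
  · exact prefix_antisymm' h hpre
  · rcases prefix_snoc_cases hpre with h | h
    · exact absurd h.length_le (by omega)
    · exact h.symm

lemma Tset_fsl (bs : List Bool) : FSLTree (Tset bs) := by
  refine ⟨⟨[], Or.inl (List.nil_prefix)⟩, fun w hw u hu => Tset_closed hw hu, ?_⟩
  intro u hu
  by_cases hpre : u <+: bs
  · exact ⟨bs, hpre, Tset_leaf_self bs⟩
  · rcases hu with h | ⟨t, b, ht, hlt, rfl⟩
    · exact absurd h hpre
    · refine ⟨t ++ [b], List.prefix_rfl, Or.inr ⟨t, b, ht, hlt, rfl⟩, ?_⟩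
      intro v hv hpv
      rcases hv with h | ⟨t', b', ht', hlt', rfl⟩
      · exact absurd (hpv.trans h) hpre
      · rcases prefix_snoc_cases hpv with h | h
        · exact absurd (h.trans ht') hpre
        · exact h.symm

lemma Tset_snoc_mem {bs u : List Bool} {b : Bool} :
    u ∈ Tset (bs ++ [b]) ↔ u ∈ Tset bs ∨ ∃ b', u = bs ++ [b'] := by
  constructor
  · rintro (h | ⟨t, b', ht, hlt, rfl⟩)
    · rcases prefix_snoc_cases h with h | rfl
      · exact Or.inl (Or.inl h)
      · exact Or.inr ⟨b, rfl⟩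
    · rcases prefix_snoc_cases ht with h | rfl
      · rcases Nat.lt_or_ge t.length bs.length with h' | h'
        · exact Or.inl (Or.inr ⟨t, b', h, h', rfl⟩)
        · have : t = bs := List.IsPrefix.eq_of_length h (le_antisymm h.length_le h')
          exact Or.inr ⟨b', by rw [this]⟩
      · simp at hlt
  · rintro ((h | ⟨t, b', ht, hlt, rfl⟩) | ⟨b', rfl⟩)
    · exact Or.inl (h.trans (List.prefix_append _ _))
    · exact Or.inr ⟨t, b', ht.trans (List.prefix_append _ _), by simp [Nat.lt_succ_of_lt hlt], rfl⟩
    · exact Or.inr ⟨bs, b', List.prefix_append _ _, by simp, rfl⟩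

lemma Tset_leaf_above {bs w : List Bool} {b : Bool} (hleaf : IsLeaf (Tset (bs ++ [b])) w)
    (hpre : bs <+: w) : ∃ b', w = bs ++ [b'] := by
  have hne : ∀ (c : Bool), bs ++ [c] ∈ Tset (bs ++ [b]) :=
    fun c => Tset_snoc_mem.2 (Or.inr ⟨c, rfl⟩)
  have hwne : w ≠ bs := by
    rintro rfl
    have := hleaf.2 (w ++ [true]) (hne true) (List.prefix_append _ _)
    simp at this
  rcases Tset_snoc_mem.1 hleaf.1 with (h | ⟨t, b', ht, hlt, rfl⟩) | h
  · exact absurd (prefix_antisymm' h hpre) hwne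
  · rcases prefix_snoc_cases hpre with h | h
    · exact absurd h.length_le (by omega)
    · exact absurd h.symm hwne
  · exact h

/-! ### enumerations as lists padded with zeros -/

def extendZ (σ : List ℕ) : ℕ → ℕ := fun i => σ.getD i 0

lemma extendZ_exists_iff {σ : List ℕ} {m : ℕ} (hm : m ≠ 0) :
    (∃ k, extendZ σ k = m) ↔ m ∈ σ := by
  constructor
  · rintro ⟨k, hk⟩
    rcases Nat.lt_or_ge k σ.length with h | h
    · rw [extendZ, List.getD_eq_getElem _ _ h] at hk
      exact hk ▸ List.getElem_mem _
    · rw [extendZ, List.getD_eq_default _ _ h] at hk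
      exact absurd hk.symm hm
  · intro h
    obtain ⟨i, hi, hv⟩ := List.getElem_of_mem h
    exact ⟨i, by rw [extendZ, List.getD_eq_getElem _ _ hi, hv]⟩

lemma extendZ_prefix {σ σ' : List ℕ} (h : σ <+: σ') {i : ℕ} (hi : i < σ.length) :
    extendZ σ' i = extendZ σ i := by
  rw [extendZ, extendZ, List.getD_eq_getElem _ _ hi,
    List.getD_eq_getElem _ _ (hi.trans_le h.length_le)]
  exact (h.getElem hi).symm

lemma enum_of_mem_iff {code : List Bool → ℕ} {σ : List ℕ} {T : Set (List Bool)}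
    (h : ∀ w, w ∈ T ↔ code w + 1 ∈ σ) : EnumeratesTree code (extendZ σ) T := by
  ext w
  rw [Set.mem_setOf_eq, extendZ_exists_iff (Nat.succ_ne_zero _), ← h w]

/-! ### continuity modulus -/

lemma modulus {F : (ℕ → ℕ) → (ℕ → Bool)} {S : Set (ℕ → ℕ)} (hF : ContinuousOn F S)
    {p : ℕ → ℕ} (hp : p ∈ S) (N : ℕ) :
    ∃ M, ∀ q ∈ S, (∀ i, i < M → q i = p i) → ∀ j, j < N → F q j = F p j := by
  have hcont : ContinuousWithinAt F S p := hF p hp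
  have hU : {g : ℕ → Bool | ∀ j, j < N → g j = F p j} ∈ nhds (F p) := by
    have heq : {g : ℕ → Bool | ∀ j, j < N → g j = F p j} =
        ⋂ j ∈ Finset.range N, {g : ℕ → Bool | g j = F p j} := by
      ext g; simp
    rw [heq]
    refine (Filter.biInter_finset_mem _).2 fun j _ => ?_
    have h1 : {b : Bool | b = F p j} ∈ nhds (F p j) := by
      rw [nhds_discrete]; exact rfl
    exact (continuous_apply j).continuousAt.preimage_mem_nhds h1
  have hmem : F ⁻¹' {g : ℕ → Bool | ∀ j, j < N → g j = F p j} ∈ nhdsWithin p S := hcont hU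
  rw [mem_nhdsWithin] at hmem
  obtain ⟨U, hUopen, hpU, hsub⟩ := hmem
  obtain ⟨I, u, hu, hIsub⟩ := isOpen_pi_iff.1 hUopen p hpU
  refine ⟨I.sup id + 1, fun q hq hag j hj => ?_⟩
  have hqU : q ∈ U := by
    apply hIsub
    rw [Set.mem_pi]
    intro i hi
    rw [hag i (Nat.lt_succ_of_le (Finset.le_sup (f := id) hi))]
    exact (hu i hi).2
  exact hsub ⟨hqU, hq⟩ j hj

/-! ### the construction step -/

lemma replicate_getD_zero (M j : ℕ) : (List.replicate M (0 : ℕ)).getD j 0 = 0 := by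
  rcases Nat.lt_or_ge j M with h | h
  · rw [List.getD_eq_getElem _ _ (by simpa using h)]; simp
  · exact List.getD_eq_default _ _ (by simpa using h)

lemma FSLstep (code : List Bool → ℕ) (hcode : Function.Injective code)
    (F : (ℕ → ℕ) → (ℕ → Bool))
    (hF : ContinuousOn F {p | ∃ T, FSLTree T ∧ EnumeratesTree code p T})
    (hsol : ∀ (p : ℕ → ℕ) (T : Set (List Bool)), FSLTree T → EnumeratesTree code p T →
      ∃ w : List Bool, DeltaS (F p) w ∧ IsLeaf T w)
    (bs : List Bool) (σ : List ℕ)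
    (henum : ∀ w, w ∈ Tset bs ↔ code w + 1 ∈ σ)
    (hname : DeltaS (F (extendZ σ)) bs) :
    ∃ (b : Bool) (σ' : List ℕ),
      (∀ w, w ∈ Tset (bs ++ [b]) ↔ code w + 1 ∈ σ') ∧
      DeltaS (F (extendZ σ')) (bs ++ [b]) ∧
      σ <+: σ' ∧ σ.length < σ'.length ∧
      ∀ q ∈ {p | ∃ T, FSLTree T ∧ EnumeratesTree code p T},
        (∀ i, i < σ'.length → q i = extendZ σ' i) → ∀ w, DeltaS (F q) w → bs <+: w := by
  obtain ⟨n, hfalse, hdec⟩ := hname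
  have hpS : extendZ σ ∈ {p | ∃ T, FSLTree T ∧ EnumeratesTree code p T} :=
    ⟨Tset bs, Tset_fsl bs, enum_of_mem_iff henum⟩
  obtain ⟨M, hM⟩ := modulus hF hpS (2 * n)
  set σ₁ := σ ++ List.replicate M 0 with hσ₁
  set σ' := σ₁ ++ [code (bs ++ [true]) + 1, code (bs ++ [false]) + 1] with hσ'
  have hσ₁len : σ₁.length = σ.length + M := by simp [hσ₁]
  have hσ'len : σ'.length = σ.length + M + 2 := by simp [hσ', hσ₁]; omega
  have hag : ∀ i, i < σ.length + M → extendZ σ' i = extendZ σ i := by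
    intro i hi
    rw [extendZ_prefix (List.prefix_append σ₁ _) (by omega)]
    rcases Nat.lt_or_ge i σ.length with h | h
    · exact extendZ_prefix (List.prefix_append σ _) h
    · have h1 : extendZ σ i = 0 := List.getD_eq_default _ _ h
      have h2 : extendZ σ₁ i = 0 := by
        rw [extendZ, hσ₁, List.getD_append_right _ _ _ _ h, replicate_getD_zero]
      rw [h1, h2]
  have hmemσ' : ∀ w : List Bool,
      code w + 1 ∈ σ' ↔ code w + 1 ∈ σ ∨ w = bs ++ [true] ∨ w = bs ++ [false] := by
    intro w
    simp only [hσ', hσ₁, List.mem_append, List.mem_replicate, List.mem_cons,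
      List.mem_singleton, List.not_mem_nil, or_false]
    constructor
    · rintro ((h | ⟨-, h⟩) | h | h)
      · exact Or.inl h
      · exact absurd h (Nat.succ_ne_zero _)
      · exact Or.inr (Or.inl (hcode (by omega)))
      · exact Or.inr (Or.inr (hcode (by omega)))
    · rintro (h | rfl | rfl)
      · exact Or.inl (Or.inl h)
      · exact Or.inr (Or.inl rfl)
      · exact Or.inr (Or.inr rfl)
  have henum' : ∀ (b : Bool) (w : List Bool),
      w ∈ Tset (bs ++ [b]) ↔ code w + 1 ∈ σ' := by
    intro b w
    rw [Tset_snoc_mem, hmemσ' w, henum]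
    have hb' : (∃ b', w = bs ++ [b']) ↔ (w = bs ++ [true] ∨ w = bs ++ [false]) := by
      constructor
      · rintro ⟨b', rfl⟩; cases b'
        · exact Or.inr rfl
        · exact Or.inl rfl
      · rintro (rfl | rfl)
        · exact ⟨true, rfl⟩
        · exact ⟨false, rfl⟩
    rw [hb']
  have hp'S : extendZ σ' ∈ {p | ∃ T, FSLTree T ∧ EnumeratesTree code p T} :=
    ⟨Tset (bs ++ [true]), Tset_fsl _, enum_of_mem_iff (henum' true)⟩
  obtain ⟨w', hw'name, hw'leaf⟩ := hsol (extendZ σ') (Tset (bs ++ [true]))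
    (Tset_fsl _) (enum_of_mem_iff (henum' true))
  have hagF : ∀ j, j < 2 * n → F (extendZ σ') j = F (extendZ σ) j :=
    hM (extendZ σ') hp'S (fun i hi => hag i (by omega))
  have hbs_pre : bs <+: w' := hdec ▸ forced_prefix hfalse hw'name hagF
  obtain ⟨b', hb'⟩ := Tset_leaf_above hw'leaf hbs_pre
  refine ⟨b', σ', henum' b', hb' ▸ hw'name, (List.prefix_append σ _).trans (List.prefix_append σ₁ _), by omega, ?_⟩
  intro q hq hagq w hw
  have hq_agree : ∀ i, i < M → q i = extendZ σ i := by
    intro i hi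
    rw [hagq i (by omega), hag i (by omega)]
  exact hdec ▸ forced_prefix hfalse hw (hM q hq hq_agree)

/-! ### the limit tree -/

lemma limit_FSL (bs : ℕ → List Bool) (h0 : bs 0 = [])
    (hsnoc : ∀ k, ∃ b, bs (k + 1) = bs k ++ [b]) :
    FSLTree (⋃ k, Tset (bs k)) := by
  have hlen : ∀ k, (bs k).length = k := by
    intro k
    induction k with
    | zero => rw [h0]; rfl
    | succ k ih => obtain ⟨b, hb⟩ := hsnoc k; rw [hb]; simp [ih]
  have hmono : ∀ k l, k ≤ l → bs k <+: bs l := by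
    intro k l h
    induction l, h using Nat.le_induction with
    | base => exact List.prefix_rfl
    | succ l _ ih =>
      obtain ⟨b, hb⟩ := hsnoc l
      rw [hb]
      exact ih.trans (List.prefix_append _ _)
  have hbs1 : ∀ k, bs (k + 1) = bs k ++ [(hsnoc k).choose] := fun k => (hsnoc k).choose_spec
  set s : ℕ → List Bool := fun k => bs k ++ [!(hsnoc k).choose] with hs
  have hsnp : ∀ k j, ¬ s k <+: bs j := by
    intro k j h
    have hl1 : (s k).length = k + 1 := by simp [hs, hlen]
    have hlj : k + 1 ≤ j := by
      have := h.length_le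
      rw [hl1, hlen] at this
      exact this
    have h2 : bs (k + 1) <+: bs j := hmono _ _ hlj
    have heq : s k = bs (k + 1) :=
      prefix_eq_of_length h h2 (by rw [hl1, hlen])
    rw [hs, hbs1 k] at heq
    simp at heq
  have hsmem : ∀ k, s k ∈ ⋃ j, Tset (bs j) := fun k =>
    Set.mem_iUnion.2 ⟨k + 1, Or.inr ⟨bs k, !(hsnoc k).choose,
      by rw [hbs1 k]; exact List.prefix_append _ _, by rw [hlen, hlen]; omega, rfl⟩⟩
  have hsleaf : ∀ k, IsLeaf (⋃ j, Tset (bs j)) (s k) := by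
    intro k
    refine ⟨hsmem k, fun v hv hpv => ?_⟩
    obtain ⟨j, hj⟩ := Set.mem_iUnion.1 hv
    rcases hj with h | ⟨t, b', ht, hlt, rfl⟩
    · exact absurd (hpv.trans h) (hsnp k j)
    · rcases prefix_snoc_cases hpv with h | h
      · exact absurd (h.trans ht) (hsnp k j)
      · exact h.symm
  refine ⟨⟨[], Set.mem_iUnion.2 ⟨0, Or.inl List.nil_prefix⟩⟩, ?_, ?_⟩
  · intro w hw u hu
    obtain ⟨j, hj⟩ := Set.mem_iUnion.1 hw
    exact Set.mem_iUnion.2 ⟨j, Tset_closed hj hu⟩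
  · intro u hu
    by_cases hex : ∃ m, u <+: bs m
    · obtain ⟨m, hm⟩ := hex
      exact ⟨s m, hm.trans (List.prefix_append _ _), hsleaf m⟩
    · push_neg at hex
      refine ⟨u, List.prefix_rfl, hu, fun v hv hpv => ?_⟩
      obtain ⟨j', hj'⟩ := Set.mem_iUnion.1 hv
      rcases hj' with h | ⟨t', b', ht', hlt', rfl⟩
      · exact absurd (hpv.trans h) (hex j')
      · rcases prefix_snoc_cases hpv with h | h
        · exact absurd (h.trans ht') (hex j')
        · exact h.symm


/-- FSL is not continuous: there is no continuous function which, from an enumeration of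
an FSL-instance tree `T`, produces a `δ_𝒮`-name of a leaf of `T`. -/
theorem FSL_not_continuous (code : List Bool → ℕ) (hcode : Function.Injective code) :
    ¬ ∃ F : (ℕ → ℕ) → (ℕ → Bool),
      ContinuousOn F {p | ∃ T, FSLTree T ∧ EnumeratesTree code p T} ∧
      ∀ (p : ℕ → ℕ) (T : Set (List Bool)), FSLTree T → EnumeratesTree code p T →
        ∃ w : List Bool, DeltaS (F p) w ∧ IsLeaf T w := by
  rintro ⟨F, hF, hsol⟩
  -- the initial stage: the tree `{[]}` enumerated by `[code [] + 1]`
  have h0enum : ∀ w : List Bool, w ∈ Tset [] ↔ code w + 1 ∈ [code [] + 1] := by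
    intro w
    constructor
    · rintro (h | ⟨t, b, ht, hlt, rfl⟩)
      · rw [List.prefix_nil.1 h]; simp
      · simp at hlt
    · intro h
      simp only [List.mem_singleton] at h
      have : w = [] := hcode (by omega)
      exact this ▸ Or.inl List.prefix_rfl
  have h0name : DeltaS (F (extendZ [code [] + 1])) [] := by
    obtain ⟨w, hn, hl⟩ := hsol (extendZ [code [] + 1]) (Tset [])
      (Tset_fsl _) (enum_of_mem_iff h0enum)
    have hwnil : w = [] := by
      rcases hl.1 with h | ⟨t, b, ht, hlt, rfl⟩
      · exact List.prefix_nil.1 h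
      · simp at hlt
    exact hwnil ▸ hn
  -- the recursively constructed sequence of stages
  let State := {x : List Bool × List ℕ // (∀ w, w ∈ Tset x.1 ↔ code w + 1 ∈ x.2) ∧
    DeltaS (F (extendZ x.2)) x.1}
  have hstep : ∀ s : State, ∃ s' : State,
      (∃ b, s'.1.1 = s.1.1 ++ [b]) ∧ s.1.2 <+: s'.1.2 ∧ s.1.2.length < s'.1.2.length ∧
      ∀ q ∈ {p | ∃ T, FSLTree T ∧ EnumeratesTree code p T},
        (∀ i, i < s'.1.2.length → q i = extendZ s'.1.2 i) →
        ∀ w, DeltaS (F q) w → s.1.1 <+: w := by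
    rintro ⟨⟨bs, σ⟩, h1, h2⟩
    obtain ⟨b, σ', he, hn, hp, hl, hf⟩ := FSLstep code hcode F hF hsol bs σ h1 h2
    exact ⟨⟨(bs ++ [b], σ'), he, hn⟩, ⟨b, rfl⟩, hp, hl, hf⟩
  let f : ℕ → State := fun k =>
    Nat.rec ⟨([], [code [] + 1]), h0enum, h0name⟩ (fun _ s => (hstep s).choose) k
  have hrel : ∀ k, (∃ b, (f (k+1)).1.1 = (f k).1.1 ++ [b]) ∧
      (f k).1.2 <+: (f (k+1)).1.2 ∧ (f k).1.2.length < (f (k+1)).1.2.length ∧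
      ∀ q ∈ {p | ∃ T, FSLTree T ∧ EnumeratesTree code p T},
        (∀ i, i < (f (k+1)).1.2.length → q i = extendZ (f (k+1)).1.2 i) →
        ∀ w, DeltaS (F q) w → (f k).1.1 <+: w :=
    fun k => (hstep (f k)).choose_spec
  have hgood : ∀ k, (∀ w, w ∈ Tset (f k).1.1 ↔ code w + 1 ∈ (f k).1.2) ∧
      DeltaS (F (extendZ (f k).1.2)) (f k).1.1 := fun k => (f k).2
  have hbs0 : (f 0).1.1 = [] := rfl
  have hσlen : ∀ k, k < (f k).1.2.length := by
    intro k
    induction k with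
    | zero => show 0 < 1; omega
    | succ k ih => have := (hrel k).2.2.1; omega
  have hσmono : ∀ k l, k ≤ l → (f k).1.2 <+: (f l).1.2 := by
    intro k l h
    induction l, h using Nat.le_induction with
    | base => exact List.prefix_rfl
    | succ l _ ih => exact ih.trans (hrel l).2.1
  have hlenbs : ∀ k, (f k).1.1.length = k := by
    intro k
    induction k with
    | zero => rw [hbs0]; rfl
    | succ k ih =>
      obtain ⟨b, hb⟩ := (hrel k).1
      rw [hb]; simp [ih]
  -- the limit enumeration
  let p : ℕ → ℕ := fun i => (f (i + 1)).1.2.getD i 0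
  have hpagree : ∀ k i, i < (f k).1.2.length → p i = extendZ (f k).1.2 i := by
    intro k i hi
    show (f (i + 1)).1.2.getD i 0 = (f k).1.2.getD i 0
    rcases le_total k (i + 1) with h | h
    · exact extendZ_prefix (hσmono k (i + 1) h) hi
    · exact (extendZ_prefix (hσmono (i + 1) k h)
        (lt_of_lt_of_le (Nat.lt_succ_self i) (le_of_lt (hσlen (i + 1))))).symm
  have hfsl : FSLTree (⋃ k, Tset (f k).1.1) :=
    limit_FSL (fun k => (f k).1.1) hbs0 (fun k => (hrel k).1)
  have henum : EnumeratesTree code p (⋃ k, Tset (f k).1.1) := by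
    apply Set.ext
    intro w
    constructor
    · intro hw
      obtain ⟨k, hk⟩ := Set.mem_iUnion.1 hw
      have hmem : code w + 1 ∈ (f k).1.2 := ((hgood k).1 w).1 hk
      obtain ⟨i, hi, hv⟩ := List.getElem_of_mem hmem
      exact ⟨i, by rw [hpagree k i hi, extendZ, List.getD_eq_getElem _ _ hi, hv]⟩
    · rintro ⟨i, hi⟩
      have hlt : i < (f (i + 1)).1.2.length :=
        lt_of_lt_of_le (Nat.lt_succ_self i) (le_of_lt (hσlen (i + 1)))
      have hmem : code w + 1 ∈ (f (i + 1)).1.2 := by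
        have hpi : p i = (f (i + 1)).1.2.getD i 0 := rfl
        rw [hpi, List.getD_eq_getElem _ _ hlt] at hi
        exact hi ▸ List.getElem_mem _
      exact Set.mem_iUnion.2 ⟨i + 1, ((hgood (i + 1)).1 w).2 hmem⟩
  have hpS : p ∈ {p | ∃ T, FSLTree T ∧ EnumeratesTree code p T} :=
    ⟨_, hfsl, henum⟩
  obtain ⟨w₀, hw₀, -⟩ := hsol p _ hfsl henum
  have hforced : ∀ k, (f k).1.1 <+: w₀ := fun k =>
    (hrel k).2.2.2 p hpS (fun i hi => hpagree (k + 1) i hi) w₀ hw₀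
  have hlenle : ∀ k, k ≤ w₀.length := fun k => (hlenbs k) ▸ (hforced k).length_le
  exact absurd (hlenle (w₀.length + 1)) (by omega)
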